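/- With notation as in the construction over F_2: for u1 ≠ u2 in [0,m) and any v2 ∈ [0,q), every vector x · C_{u2,q,v2} with x ∈ Q_{u1} lies in the span of Q_{u1}; and for u1 ∈ [0,m), any v3 ∈ [0,q), v2 ∈ [0,q) with v3 ≠ v2, every vector x · C_{u2,v3,v2} with x ∈ Q_{u1} and u2 = u1 equals the zero vector. -/

import Mathlib

/-- The matrix `C_{u,v3,v2}` over `F_2`, indexed by base-`q` digit strings of length `m`.
For `v3 < q`, its `s`-th row is `φ_{u,v3}(s)·e_{ϕ_{u,v2}(s)} + φ_{u,v2}(s)·e_s`;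
for `v3 = q`, its `s`-th row is `φ_{u,v2}(s)·e_s`. -/
def Cmat (q m : ℕ) (u : Fin m) (v3 : Fin (q + 1)) (v2 : Fin q) :
    Matrix (Fin m → Fin q) (Fin m → Fin q) (ZMod 2) :=
  Matrix.of fun s t =>
    if h : (v3 : ℕ) < q then
      (if s u = (⟨(v3 : ℕ), h⟩ : Fin q) then
        (Pi.single (Function.update s u v2) (1 : ZMod 2) : (Fin m → Fin q) → ZMod 2) t else 0) +
      (if s u = v2 then (Pi.single s (1 : ZMod 2) : (Fin m → Fin q) → ZMod 2) t else 0)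
    else
      (if s u = v2 then (Pi.single s (1 : ZMod 2) : (Fin m → Fin q) → ZMod 2) t else 0)


/-- The vector `q_s = Σ_{a ∈ [0,q)} e_{(s with u-th digit set to a)}` over `F_2`. -/
def qvec (q m : ℕ) (u : Fin m) (s : Fin m → Fin q) : (Fin m → Fin q) → ZMod 2 :=
  ∑ a : Fin q, Pi.single (Function.update s u a) (1 : ZMod 2)


lemma qvec_vecMul (q m : ℕ) (u : Fin m) (s : Fin m → Fin q)
    (M : Matrix (Fin m → Fin q) (Fin m → Fin q) (ZMod 2)) :
    Matrix.vecMul (qvec q m u s) M = ∑ a : Fin q, M (Function.update s u a) := by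
  ext t
  simp only [Matrix.vecMul, dotProduct, qvec, Finset.sum_apply, Finset.sum_mul]
  rw [Finset.sum_comm]
  simp [Pi.single_apply, ite_mul]

/-- Lemma 1 (III), second part: if `u1 ≠ u2` then every `x · C_{u2,q,v2}` with `x ∈ Q_{u1}`
lies in the span of `Q_{u1}`; and if `v3 < q` with `v3 ≠ v2` then `x · C_{u1,v3,v2} = 0`
for every `x ∈ Q_{u1}` (the two equal summands cancel over `F_2`). -/
theorem stmt9 (q m : ℕ) (u1 u2 : Fin m) (v2 : Fin q) :
    (∀ (_ : u1 ≠ u2) (s : Fin m → Fin q),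
      Matrix.vecMul (qvec q m u1 s) (Cmat q m u2 (Fin.last q) v2) ∈
        Submodule.span (ZMod 2) (Set.range (qvec q m u1))) ∧
    (∀ v3 : Fin q, v3 ≠ v2 → ∀ s : Fin m → Fin q,
      Matrix.vecMul (qvec q m u1 s) (Cmat q m u1 (Fin.castSucc v3) v2) = 0) := by
  constructor
  · intro h s
    rw [qvec_vecMul]
    have hrow : ∀ a : Fin q, Cmat q m u2 (Fin.last q) v2 (Function.update s u1 a)
        = if s u2 = v2 then Pi.single (Function.update s u1 a) (1 : ZMod 2) else 0 := by
      intro a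
      funext t
      simp [Cmat, Function.update_of_ne (Ne.symm h),
        apply_ite (fun f : (Fin m → Fin q) → ZMod 2 => f t)]
    simp only [hrow]
    by_cases hc : s u2 = v2
    · simp only [hc, if_true]
      exact Submodule.subset_span ⟨s, rfl⟩
    · simp [hc]
  · intro v3 hne s
    rw [qvec_vecMul]
    have hrow : ∀ a : Fin q, Cmat q m u1 (Fin.castSucc v3) v2 (Function.update s u1 a)
        = (if a = v3 then Pi.single (Function.update s u1 v2) (1 : ZMod 2) else 0)
          + (if a = v2 then Pi.single (Function.update s u1 v2) (1 : ZMod 2) else 0) := by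
      intro a
      funext t
      have h1 : Function.update (Function.update s u1 a) u1 v2 = Function.update s u1 v2 :=
        Function.update_idem ..
      simp only [Cmat, Matrix.of_apply, Fin.coe_castSucc, v3.isLt, dif_pos,
        Function.update_self, Fin.eta, h1, Pi.add_apply,
        apply_ite (fun f : (Fin m → Fin q) → ZMod 2 => f t), Pi.zero_apply]
      by_cases hv : a = v2
      · subst hv; rfl
      · simp [hv]
    simp only [hrow, Finset.sum_add_distrib, Finset.sum_ite_eq' Finset.univ]
    simp only [Finset.mem_univ, if_true]
    funext t
    exact CharTwo.add_self_eq_zero _
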